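/- (Perturbed linear recurrence for the 3-armed DPO-Unif iteration.) Let 𝒴 = {a₁, a₂, a₃} with rewards r(a₁) = 0, r(a₂) = 1/3, r(a₃) = 1, uniform reference policy, β > 0, η > 0, and let the parameters evolve by the exact DPO-Unif update θ^(t+1)_a = θ^(t)_a + 4ηβ Σ_{a'∈𝒴} Δ(a,a';θ^(t)). Set x_t := δ(a₂,a₁;θ^(t)), y_t := δ(a₃,a₂;θ^(t)), s₁ = σ'(1/3), s₂ = σ'(2/3), s₃ = σ'(1), and let B = [[1 − 4ηβ²(2s₁ + s₃), 4ηβ²(s₂ − s₃)], [4ηβ²(s₁ − s₃), 1 − 4ηβ²(2s₂ + s₃)]]. Then for every t ∈ ℕ: |x_{t+1} − B₁₁ x_t − B₁₂ y_t| ≤ ηβ² (4x_t² + 3y_t²)/(3√3) and |y_{t+1} − B₂₁ x_t − B₂₂ y_t| ≤ ηβ² (3x_t² + 4y_t²)/(3√3). -/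

import Mathlib

/-- The sigmoid function. -/
noncomputable def sig (x : ℝ) : ℝ := 1 / (1 + Real.exp (-x))

/-- The derivative of the sigmoid function. -/
noncomputable def sig' (x : ℝ) : ℝ := sig x * (1 - sig x)

/-- The rewards of the 3-armed bandit example: `r(a₁)=0`, `r(a₂)=1/3`, `r(a₃)=1`. -/
noncomputable def r3 : Fin 3 → ℝ := ![0, 1/3, 1]

lemma sig_pos (x : ℝ) : 0 < sig x := by unfold sig; positivity

lemma sig_lt_one (x : ℝ) : sig x < 1 := by
  unfold sig
  rw [div_lt_one (by positivity)]
  linarith [Real.exp_pos (-x)]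

lemma sig_hasDerivAt (x : ℝ) : HasDerivAt sig (sig' x) x := by
  have h : HasDerivAt (fun x : ℝ => 1 + Real.exp (-x)) (-Real.exp (-x)) x := by
    have := ((Real.hasDerivAt_exp (-x)).comp x (hasDerivAt_neg x)).const_add 1
    simpa using this
  have hne : (1 + Real.exp (-x)) ≠ 0 := by positivity
  have h2 := h.inv hne
  have hfun : (fun x : ℝ => (1 + Real.exp (-x))⁻¹) = sig := by
    ext y; simp [sig, one_div]
  change HasDerivAt (fun x : ℝ => (1 + Real.exp (-x))⁻¹) _ x at h2
  rw [hfun] at h2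
  convert h2 using 1
  unfold sig' sig
  have he : 0 < 1 + Real.exp (-x) := by positivity
  field_simp
  ring

lemma sig_neg (x : ℝ) : sig (-x) = 1 - sig x := by
  unfold sig
  have h1 : (0:ℝ) < 1 + Real.exp (-x) := by positivity
  have h2 : (0:ℝ) < 1 + Real.exp x := by positivity
  rw [neg_neg]
  field_simp
  rw [add_sub_cancel_left, add_mul, one_mul, ← Real.exp_add]
  simp [add_comm]

lemma sig'_hasDerivAt (x : ℝ) : HasDerivAt sig' (sig' x * (1 - 2 * sig x)) x := by
  have h := (sig_hasDerivAt x).mul ((sig_hasDerivAt x).const_sub 1)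
  have hfun : (fun y => sig y * (1 - sig y)) = sig' := by ext y; rfl
  change HasDerivAt (fun y => sig y * (1 - sig y)) _ x at h
  rw [hfun] at h
  convert h using 1
  unfold sig'
  ring

lemma continuous_sig : Continuous sig :=
  continuous_iff_continuousAt.mpr fun x => (sig_hasDerivAt x).continuousAt

lemma continuous_sig' : Continuous sig' :=
  (continuous_sig.mul (continuous_const.sub continuous_sig))

lemma sig''_bound (x : ℝ) : |sig' x * (1 - 2 * sig x)| ≤ 1 / (6 * Real.sqrt 3) := by
  have hs := sig_pos x
  have hs1 := sig_lt_one x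
  have hc : Real.sqrt 3 ^ 2 = 3 := Real.sq_sqrt (by norm_num)
  have hcpos : (0:ℝ) < Real.sqrt 3 := Real.sqrt_pos.mpr (by norm_num)
  set s := sig x with hsdef
  have h108 : 108 * (sig' x * (1 - 2 * s))^2 ≤ 1 := by
    unfold sig'
    rw [← hsdef]
    nlinarith [sq_nonneg (6*s*(1-s) - 1), mul_pos hs (by linarith : (0:ℝ) < 1 - s)]
  have habs : 0 ≤ |sig' x * (1 - 2 * s)| := abs_nonneg _
  have hsq : (6 * Real.sqrt 3 * |sig' x * (1 - 2 * s)|)^2 ≤ 1 := by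
    rw [mul_pow, mul_pow, sq_abs]
    nlinarith
  have h6 : 6 * Real.sqrt 3 * |sig' x * (1 - 2 * s)| ≤ 1 := by
    nlinarith [mul_nonneg (mul_nonneg (by norm_num : (0:ℝ) ≤ 6) hcpos.le) habs]
  rw [le_div_iff₀ (by positivity)]
  linarith

lemma sig'_lipschitz (u v : ℝ) : |sig' u - sig' v| ≤ 1 / (6 * Real.sqrt 3) * |u - v| := by
  have h := Convex.norm_image_sub_le_of_norm_hasDerivWithin_le
    (f := sig') (f' := fun x => sig' x * (1 - 2 * sig x)) (s := Set.univ)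
    (fun x _ => (sig'_hasDerivAt x).hasDerivWithinAt)
    (fun x _ => by simpa only [Real.norm_eq_abs] using sig''_bound x)
    convex_univ (Set.mem_univ v) (Set.mem_univ u)
  simpa [Real.norm_eq_abs] using h

lemma sig_taylor (a b : ℝ) :
    |sig b - sig a - sig' a * (b - a)| ≤ (b - a) ^ 2 / (12 * Real.sqrt 3) := by
  have hs3 : (0:ℝ) < Real.sqrt 3 := Real.sqrt_pos.mpr (by norm_num)
  have hder : ∀ t ∈ Set.uIcc a b,
      HasDerivAt (fun x => sig x - sig' a * x) (sig' t - sig' a) t := by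
    intro t _
    exact ((sig_hasDerivAt t).sub ((hasDerivAt_id t).const_mul (sig' a))).congr_deriv (by simp)
  have hcont : Continuous fun t => sig' t - sig' a := continuous_sig'.sub continuous_const
  have hint : IntervalIntegrable (fun t => sig' t - sig' a) MeasureTheory.volume a b :=
    hcont.intervalIntegrable a b
  have heq : ∫ t in a..b, (sig' t - sig' a) =
      (sig b - sig' a * b) - (sig a - sig' a * a) :=
    intervalIntegral.integral_eq_sub_of_hasDerivAt hder hint
  have hmain : |∫ t in a..b, (sig' t - sig' a)| ≤ (b - a) ^ 2 / (12 * Real.sqrt 3) := by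
    rcases le_total a b with hab | hab
    · have h1 : |∫ t in a..b, (sig' t - sig' a)| ≤ ∫ t in a..b, |sig' t - sig' a| :=
        intervalIntegral.abs_integral_le_integral_abs hab
      have h2 : ∫ t in a..b, |sig' t - sig' a| ≤
          ∫ t in a..b, 1 / (6 * Real.sqrt 3) * (t - a) := by
        apply intervalIntegral.integral_mono_on hab (hcont.abs.intervalIntegrable a b)
          ((continuous_const.mul (continuous_id.sub continuous_const)).intervalIntegrable a b)
        intro t ht
        have h := sig'_lipschitz t a
        rwa [abs_of_nonneg (by linarith [ht.1] : (0:ℝ) ≤ t - a)] at h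
      have h3 : ∫ t in a..b, 1 / (6 * Real.sqrt 3) * (t - a) =
          1 / (6 * Real.sqrt 3) * ((b - a) ^ 2 / 2) := by
        rw [intervalIntegral.integral_const_mul]
        have h4 : ∫ t in a..b, (t - a) = (b ^ 2 - a ^ 2) / 2 - a * (b - a) := by
          rw [intervalIntegral.integral_sub (continuous_id'.intervalIntegrable _ _)
            intervalIntegrable_const]
          simp [integral_id]
          ring
        rw [h4]; ring
      calc |∫ t in a..b, (sig' t - sig' a)| ≤ ∫ t in a..b, 1 / (6 * Real.sqrt 3) * (t - a) :=
            le_trans h1 h2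
        _ = (b - a) ^ 2 / (12 * Real.sqrt 3) := by rw [h3]; ring
    · rw [intervalIntegral.integral_symm, abs_neg]
      have h1 : |∫ t in b..a, (sig' t - sig' a)| ≤ ∫ t in b..a, |sig' t - sig' a| :=
        intervalIntegral.abs_integral_le_integral_abs hab
      have h2 : ∫ t in b..a, |sig' t - sig' a| ≤
          ∫ t in b..a, 1 / (6 * Real.sqrt 3) * (a - t) := by
        apply intervalIntegral.integral_mono_on hab (hcont.abs.intervalIntegrable b a)
          ((continuous_const.mul (continuous_const.sub continuous_id)).intervalIntegrable b a)
        intro t ht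
        have h := sig'_lipschitz t a
        rwa [abs_of_nonpos (by linarith [ht.2] : t - a ≤ 0), neg_sub] at h
      have h3 : ∫ t in b..a, 1 / (6 * Real.sqrt 3) * (a - t) =
          1 / (6 * Real.sqrt 3) * ((a - b) ^ 2 / 2) := by
        rw [intervalIntegral.integral_const_mul]
        have h4 : ∫ t in b..a, (a - t) = a * (a - b) - (a ^ 2 - b ^ 2) / 2 := by
          rw [intervalIntegral.integral_sub intervalIntegrable_const (continuous_id'.intervalIntegrable _ _)]
          simp [integral_id]
          ring
        rw [h4]; ring
      calc |∫ t in b..a, (sig' t - sig' a)| ≤ ∫ t in b..a, 1 / (6 * Real.sqrt 3) * (a - t) :=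
            le_trans h1 h2
        _ = (b - a) ^ 2 / (12 * Real.sqrt 3) := by rw [h3]; ring
  calc |sig b - sig a - sig' a * (b - a)| = |∫ t in a..b, (sig' t - sig' a)| := by
        rw [heq]; ring_nf
    _ ≤ (b - a) ^ 2 / (12 * Real.sqrt 3) := hmain

lemma sig_E (c u : ℝ) :
    |sig c - sig (c - u) - sig' c * u| ≤ u ^ 2 / (12 * Real.sqrt 3) := by
  have h := sig_taylor c (c - u)
  rw [show c - u - c = -u by ring] at h
  rw [show sig c - sig (c - u) - sig' c * u
      = -(sig (c - u) - sig c - sig' c * (-u)) by ring, abs_neg]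
  simpa using h

lemma bound_helper (η β x y E1 E2 E3 : ℝ) (hη : 0 < η) (hβ : 0 < β)
    (h1 : |E1| ≤ x ^ 2 / (12 * Real.sqrt 3)) (h2 : |E2| ≤ y ^ 2 / (12 * Real.sqrt 3))
    (h3 : |E3| ≤ (x + y) ^ 2 / (12 * Real.sqrt 3)) :
    |(-(4 * η * β ^ 2 * (2 * E1 - E2 + E3)))|
      ≤ η * β ^ 2 * (4 * x ^ 2 + 3 * y ^ 2) / (3 * Real.sqrt 3) := by
  have hs3 : (0:ℝ) < Real.sqrt 3 := Real.sqrt_pos.mpr (by norm_num)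
  have h4 : (0:ℝ) ≤ 4 * η * β ^ 2 := by positivity
  rw [abs_neg, abs_mul, abs_of_nonneg h4]
  have htri : |2 * E1 - E2 + E3| ≤ 2 * |E1| + |E2| + |E3| := by
    have a1 : |2 * E1 - E2 + E3| ≤ |2 * E1 - E2| + |E3| := abs_add_le _ _
    have a2 : |2 * E1 - E2| ≤ |2 * E1| + |E2| := abs_sub _ _
    have a3 : |2 * E1| = 2 * |E1| := by rw [abs_mul]; norm_num
    linarith
  have hsum : 2 * |E1| + |E2| + |E3| ≤ (2 * x ^ 2 + y ^ 2 + (x + y) ^ 2) / (12 * Real.sqrt 3) := by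
    rw [show (2 * x ^ 2 + y ^ 2 + (x + y) ^ 2) / (12 * Real.sqrt 3)
        = 2 * (x ^ 2 / (12 * Real.sqrt 3)) + y ^ 2 / (12 * Real.sqrt 3)
          + (x + y) ^ 2 / (12 * Real.sqrt 3) by ring]
    linarith
  have hcomp : 2 * x ^ 2 + y ^ 2 + (x + y) ^ 2 ≤ 4 * x ^ 2 + 3 * y ^ 2 := by
    nlinarith [sq_nonneg (x - y)]
  calc 4 * η * β ^ 2 * |2 * E1 - E2 + E3|
      ≤ 4 * η * β ^ 2 * ((2 * x ^ 2 + y ^ 2 + (x + y) ^ 2) / (12 * Real.sqrt 3)) :=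
        mul_le_mul_of_nonneg_left (le_trans htri hsum) h4
    _ = η * β ^ 2 * (2 * x ^ 2 + y ^ 2 + (x + y) ^ 2) / (3 * Real.sqrt 3) := by ring
    _ ≤ η * β ^ 2 * (4 * x ^ 2 + 3 * y ^ 2) / (3 * Real.sqrt 3) := by gcongr

lemma main_aux (η β x y x' y' : ℝ) (hη : 0 < η) (hβ : 0 < β)
    (hx' : x' = x - 4 * η * β ^ 2 *
      (2 * (sig (1/3) - sig (1/3 - x)) - (sig (2/3) - sig (2/3 - y))
        + (sig 1 - sig (1 - (x + y)))))
    (hy' : y' = y - 4 * η * β ^ 2 *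
      (2 * (sig (2/3) - sig (2/3 - y)) + (sig 1 - sig (1 - (x + y)))
        - (sig (1/3) - sig (1/3 - x)))) :
    (|x' - (1 - 4 * η * β ^ 2 * (2 * sig' (1/3) + sig' 1)) * x
        - (4 * η * β ^ 2 * (sig' (2/3) - sig' 1)) * y|
      ≤ η * β ^ 2 * (4 * x ^ 2 + 3 * y ^ 2) / (3 * Real.sqrt 3)) ∧
    (|y' - (4 * η * β ^ 2 * (sig' (1/3) - sig' 1)) * x
        - (1 - 4 * η * β ^ 2 * (2 * sig' (2/3) + sig' 1)) * y|
      ≤ η * β ^ 2 * (3 * x ^ 2 + 4 * y ^ 2) / (3 * Real.sqrt 3)) := by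
  have hb1 : |sig (1/3) - sig (1/3 - x) - sig' (1/3) * x| ≤ x ^ 2 / (12 * Real.sqrt 3) :=
    sig_E (1/3) x
  have hb2 : |sig (2/3) - sig (2/3 - y) - sig' (2/3) * y| ≤ y ^ 2 / (12 * Real.sqrt 3) :=
    sig_E (2/3) y
  have hb3 : |sig 1 - sig (1 - (x + y)) - sig' 1 * (x + y)| ≤ (x + y) ^ 2 / (12 * Real.sqrt 3) :=
    sig_E 1 (x + y)
  constructor
  · have key1 : x' - (1 - 4 * η * β ^ 2 * (2 * sig' (1/3) + sig' 1)) * x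
        - (4 * η * β ^ 2 * (sig' (2/3) - sig' 1)) * y
        = -(4 * η * β ^ 2 *
            (2 * (sig (1/3) - sig (1/3 - x) - sig' (1/3) * x)
              - (sig (2/3) - sig (2/3 - y) - sig' (2/3) * y)
              + (sig 1 - sig (1 - (x + y)) - sig' 1 * (x + y)))) := by
      rw [hx']; ring
    rw [key1]
    exact bound_helper η β x y _ _ _ hη hβ hb1 hb2 hb3
  · have key2 : y' - (4 * η * β ^ 2 * (sig' (1/3) - sig' 1)) * x
        - (1 - 4 * η * β ^ 2 * (2 * sig' (2/3) + sig' 1)) * y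
        = -(4 * η * β ^ 2 *
            (2 * (sig (2/3) - sig (2/3 - y) - sig' (2/3) * y)
              - (sig (1/3) - sig (1/3 - x) - sig' (1/3) * x)
              + (sig 1 - sig (1 - (x + y)) - sig' 1 * (x + y)))) := by
      rw [hy']; ring
    rw [key2]
    have hb3' : |sig 1 - sig (1 - (x + y)) - sig' 1 * (x + y)| ≤ (y + x) ^ 2 / (12 * Real.sqrt 3) := by
      rwa [show (y + x) ^ 2 = (x + y) ^ 2 by ring]
    calc |(-(4 * η * β ^ 2 *
            (2 * (sig (2/3) - sig (2/3 - y) - sig' (2/3) * y)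
              - (sig (1/3) - sig (1/3 - x) - sig' (1/3) * x)
              + (sig 1 - sig (1 - (x + y)) - sig' 1 * (x + y)))))|
        ≤ η * β ^ 2 * (4 * y ^ 2 + 3 * x ^ 2) / (3 * Real.sqrt 3) :=
          bound_helper η β y x _ _ _ hη hβ hb2 hb1 hb3'
      _ = η * β ^ 2 * (3 * x ^ 2 + 4 * y ^ 2) / (3 * Real.sqrt 3) := by ring

/-- **Perturbed linear recurrence for the 3-armed DPO-Unif iteration.**
With `x_t = δ(a₂,a₁;θ^t)`, `y_t = δ(a₃,a₂;θ^t)`, the exact DPO-Unif iterates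
satisfy a linear recursion governed by the matrix `B`, up to quadratic error
terms bounded by `ηβ²(4x_t²+3y_t²)/(3√3)` and `ηβ²(3x_t²+4y_t²)/(3√3)`. -/
theorem dpo_unif_three_arm_recurrence
    (β η : ℝ) (hβ : 0 < β) (hη : 0 < η)
    (θ : ℕ → Fin 3 → ℝ)
    (hupd : ∀ t a, θ (t + 1) a = θ t a +
      4 * η * β * ∑ a' : Fin 3,
        (sig (r3 a - r3 a') - sig (β * (θ t a - θ t a')))) :
    ∀ t : ℕ,
      (fun x y x' y' =>
        |x' - (1 - 4 * η * β ^ 2 * (2 * sig' (1/3) + sig' 1)) * x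
            - (4 * η * β ^ 2 * (sig' (2/3) - sig' 1)) * y|
          ≤ η * β ^ 2 * (4 * x ^ 2 + 3 * y ^ 2) / (3 * Real.sqrt 3) ∧
        |y' - (4 * η * β ^ 2 * (sig' (1/3) - sig' 1)) * x
            - (1 - 4 * η * β ^ 2 * (2 * sig' (2/3) + sig' 1)) * y|
          ≤ η * β ^ 2 * (3 * x ^ 2 + 4 * y ^ 2) / (3 * Real.sqrt 3))
      (r3 1 - r3 0 - β * (θ t 1 - θ t 0))
      (r3 2 - r3 1 - β * (θ t 2 - θ t 1))
      (r3 1 - r3 0 - β * (θ (t + 1) 1 - θ (t + 1) 0))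
      (r3 2 - r3 1 - β * (θ (t + 1) 2 - θ (t + 1) 1)) := by
  intro t
  refine main_aux η β _ _ _ _ hη hβ ?_ ?_
  · have h0 := hupd t 0
    have h1 := hupd t 1
    simp only [Fin.sum_univ_three] at h0 h1
    rw [show β * (θ t 0 - θ t 1) = -(β * (θ t 1 - θ t 0)) by ring,
        show β * (θ t 0 - θ t 2) = -(β * (θ t 2 - θ t 0)) by ring] at h0
    rw [show β * (θ t 1 - θ t 2) = -(β * (θ t 2 - θ t 1)) by ring] at h1
    rw [show (1/3 - (r3 1 - r3 0 - β * (θ t 1 - θ t 0))) = β * (θ t 1 - θ t 0) by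
          norm_num [r3, Matrix.cons_val_two],
        show (2/3 - (r3 2 - r3 1 - β * (θ t 2 - θ t 1))) = β * (θ t 2 - θ t 1) by
          norm_num [r3, Matrix.cons_val_two],
        show (1 - ((r3 1 - r3 0 - β * (θ t 1 - θ t 0)) + (r3 2 - r3 1 - β * (θ t 2 - θ t 1))))
            = β * (θ t 2 - θ t 0) by norm_num [r3, Matrix.cons_val_two]; ring]
    rw [h1, h0]
    norm_num [r3, Matrix.cons_val_two, sig_neg]
    ring
  · have h1 := hupd t 1
    have h2 := hupd t 2
    simp only [Fin.sum_univ_three] at h1 h2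
    rw [show β * (θ t 1 - θ t 2) = -(β * (θ t 2 - θ t 1)) by ring] at h1
    rw [show (1/3 - (r3 1 - r3 0 - β * (θ t 1 - θ t 0))) = β * (θ t 1 - θ t 0) by
          norm_num [r3, Matrix.cons_val_two],
        show (2/3 - (r3 2 - r3 1 - β * (θ t 2 - θ t 1))) = β * (θ t 2 - θ t 1) by
          norm_num [r3, Matrix.cons_val_two],
        show (1 - ((r3 1 - r3 0 - β * (θ t 1 - θ t 0)) + (r3 2 - r3 1 - β * (θ t 2 - θ t 1))))
            = β * (θ t 2 - θ t 0) by norm_num [r3, Matrix.cons_val_two]; ring]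
    rw [h2, h1]
    norm_num [r3, Matrix.cons_val_two, sig_neg]
    ring
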